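/- Let φ be the character of A = {k ∈ ℤ^n : Σ k_i = 0} given by φ(k) = Π ω^{j k_j} for ω a primitive n-th root of unity, regarded as a character of A invariant under the full symmetric group action restricted to the n-cycle. The stabilizer of φ in S_n (acting on characters of A by permuting coordinates) is exactly the cyclic subgroup of order n generated by the cycle (1 2 … n). -/

import Mathlib

open Fin.NatCast

private lemma prod_zpow_eq {α : Type*} (ω : ℂ) (hω : ω ≠ 0) (s : Finset α) (f : α → ℤ) :
    ∏ i ∈ s, ω ^ f i = ω ^ ∑ i ∈ s, f i := by
  classical
  induction s using Finset.induction with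
  | empty => simp
  | insert a s h ih => rw [Finset.prod_insert h, Finset.sum_insert h, ih, zpow_add₀ hω]

private lemma key (n : ℕ) (ω : ℂ) (hω : IsPrimitiveRoot ω (n+1)) (σ : Equiv.Perm (Fin (n+1)))
    (k : Fin (n+1) → ℤ) :
    (∏ i : Fin (n+1), ω ^ ((((i : ℕ) : ℤ) + 1) * k (σ i)) =
      ∏ i : Fin (n+1), ω ^ ((((i : ℕ) : ℤ) + 1) * k i)) ↔
    ((n : ℤ) + 1) ∣ ∑ i : Fin (n+1), ((((σ⁻¹ i : Fin (n+1)) : ℕ) : ℤ) - ((i : ℕ) : ℤ)) * k i := by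
  have hne : ω ≠ 0 := hω.ne_zero (Nat.succ_ne_zero n)
  have h1 : ∏ i : Fin (n+1), ω ^ ((((i : ℕ) : ℤ) + 1) * k (σ i)) =
      ω ^ ∑ i : Fin (n+1), ((((σ⁻¹ i : Fin (n+1)) : ℕ) : ℤ) + 1) * k i := by
    rw [prod_zpow_eq ω hne, ← Equiv.sum_comp σ
      (fun i => ((((σ⁻¹ i : Fin (n+1)) : ℕ) : ℤ) + 1) * k i)]
    simp
  rw [h1, prod_zpow_eq ω hne]
  have h2 : ∀ a b : ℤ, ω ^ a = ω ^ b ↔ ((n:ℤ)+1) ∣ (a - b) := by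
    intro a b
    have := hω.zpow_eq_one_iff_dvd (a - b)
    rw [zpow_sub₀ hne, div_eq_one_iff_eq (zpow_ne_zero _ hne)] at this
    rw [this, Nat.cast_add, Nat.cast_one]
  rw [h2]
  congr! 1
  rw [← Finset.sum_sub_distrib]
  apply Finset.sum_congr rfl
  intro i _
  ring

private lemma fin_add_cast (n : ℕ) (a b : Fin (n+1)) :
    (((a + b : Fin (n+1)) : ℕ) : ZMod (n+1)) = ((a : ℕ) : ZMod (n+1)) + ((b : ℕ) : ZMod (n+1)) := by
  rw [Fin.val_add, ZMod.natCast_mod, Nat.cast_add]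

private lemma fin_eq_of_zmod (n : ℕ) (a b : Fin (n+1))
    (h : ((a : ℕ) : ZMod (n+1)) = ((b : ℕ) : ZMod (n+1))) : a = b := by
  have := congrArg ZMod.val h
  rw [ZMod.val_natCast_of_lt a.isLt, ZMod.val_natCast_of_lt b.isLt] at this
  exact Fin.ext this

private lemma hrot (n : ℕ) (i : Fin (n+1)) :
    ((((finRotate (n+1))⁻¹ i : Fin (n+1)) : ℕ) : ZMod (n+1)) = ((i : ℕ) : ZMod (n+1)) - 1 := by
  have h : finRotate (n+1) ((finRotate (n+1))⁻¹ i) = i := Equiv.apply_symm_apply _ _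
  rw [finRotate_succ_apply] at h
  have h1 : (((1 : Fin (n+1)) : ℕ) : ZMod (n+1)) = 1 := by
    rw [Fin.val_one', ZMod.natCast_mod, Nat.cast_one]
  conv_rhs => rw [← h]
  rw [fin_add_cast, h1]
  ring

private lemma dvd_iff_zmod (n : ℕ) (x : ℤ) :
    ((n : ℤ) + 1) ∣ x ↔ ((x : ZMod (n+1)) = 0) := by
  rw [ZMod.intCast_zmod_eq_zero_iff_dvd]
  push_cast
  rfl

private lemma finRotate_pow (n m : ℕ) (j : Fin (n+1)) :
    ((finRotate (n+1)) ^ m) j = j + (m : Fin (n+1)) := by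
  induction m with
  | zero => simp
  | succ m ih =>
    rw [pow_succ', Equiv.Perm.mul_apply, finRotate_succ_apply, ih]
    push_cast
    simp only [Nat.cast_succ, add_assoc]

/-- the stabilizer in `S_n` (acting on characters of
`A = {k ∈ ℤ^n : ∑ k_i = 0}` by permuting coordinates) of the character
`φ(k) = ∏_j ω^{j·k_j}` (`ω` a primitive `n`-th root of unity) is exactly the
cyclic subgroup of order `n` generated by the cycle `(1 2 … n)`. -/
theorem stmt_9 (n : ℕ) (ω : ℂ) (hω : IsPrimitiveRoot ω n) (σ : Equiv.Perm (Fin n)) :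
    (∀ k : Fin n → ℤ, ∑ i, k i = 0 →
        ∏ i : Fin n, ω ^ ((((i : ℕ) : ℤ) + 1) * k (σ i)) =
          ∏ i : Fin n, ω ^ ((((i : ℕ) : ℤ) + 1) * k i)) ↔
      σ ∈ Subgroup.zpowers (finRotate n) := by
  rcases n with _ | n
  · constructor
    · intro _
      have hσ1 : σ = 1 := Subsingleton.elim σ 1
      rw [hσ1]; exact Subgroup.one_mem _
    · intro _ k _
      simp
  · constructor
    · intro H
      have hd : ∀ j : Fin (n+1), ((n:ℤ)+1) ∣
          (((((σ⁻¹ j : Fin (n+1)) : ℕ) : ℤ) - ((j:ℕ):ℤ)) -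
            ((((σ⁻¹ 0 : Fin (n+1)) : ℕ) : ℤ) - (((0 : Fin (n+1)):ℕ):ℤ))) := by
        intro j
        have hk : ∑ i : Fin (n+1),
            ((if i = j then (1:ℤ) else 0) - (if i = (0 : Fin (n+1)) then 1 else 0)) = 0 := by
          simp
        have hdvd := (key n ω hω σ _).mp (H _ hk)
        simpa only [mul_sub, mul_ite, mul_one, mul_zero, Finset.sum_sub_distrib,
          Finset.sum_ite_eq', Finset.mem_univ, if_true] using hdvd
      have heq : ∀ j : Fin (n+1), σ⁻¹ j = j + σ⁻¹ 0 := by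
        intro j
        apply fin_eq_of_zmod
        have hz := (dvd_iff_zmod _ _).mp (hd j)
        push_cast at hz
        rw [fin_add_cast]
        simp only [Fin.val_zero, Nat.cast_zero] at hz
        linear_combination hz
      have hσinv : σ⁻¹ = (finRotate (n+1)) ^ (((σ⁻¹ 0 : Fin (n+1))) : ℕ) := by
        apply Equiv.ext
        intro j
        rw [heq j, finRotate_pow, Fin.cast_val_eq_self]
      have hmem : σ⁻¹ ∈ Subgroup.zpowers (finRotate (n+1)) :=
        hσinv ▸ Subgroup.pow_mem _ (Subgroup.mem_zpowers _) _
      simpa using Subgroup.inv_mem _ hmem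
    · intro hσ
      let S : Subgroup (Equiv.Perm (Fin (n+1))) :=
        { carrier := {τ | ∀ k : Fin (n+1) → ℤ, ∑ i, k i = 0 →
            ∏ i : Fin (n+1), ω ^ ((((i : ℕ) : ℤ) + 1) * k (τ i)) =
              ∏ i : Fin (n+1), ω ^ ((((i : ℕ) : ℤ) + 1) * k i)}
          one_mem' := by intro k _; simp
          mul_mem' := by
            intro a b ha hb k hk
            simp only [Equiv.Perm.mul_apply]
            calc ∏ i : Fin (n+1), ω ^ ((((i : ℕ) : ℤ) + 1) * k (a (b i)))
                = ∏ i : Fin (n+1), ω ^ ((((i : ℕ) : ℤ) + 1) * (k ∘ a) (b i)) := rfl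
              _ = ∏ i : Fin (n+1), ω ^ ((((i : ℕ) : ℤ) + 1) * (k ∘ a) i) :=
                  hb (k ∘ a) ((Equiv.sum_comp a k).trans hk)
              _ = ∏ i : Fin (n+1), ω ^ ((((i : ℕ) : ℤ) + 1) * k i) := ha k hk
          inv_mem' := by
            intro a ha k hk
            have h2 := ha (fun i => k (a⁻¹ i)) ((Equiv.sum_comp a⁻¹ k).trans hk)
            simp only [Function.comp_apply, Equiv.Perm.coe_inv, Equiv.symm_apply_apply] at h2
            exact h2.symm }
      have hmem : finRotate (n+1) ∈ S := by
        intro k hk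
        rw [key n ω hω (finRotate (n+1)) k, dvd_iff_zmod]
        push_cast
        have hterm : ∀ i : Fin (n+1),
            (((((finRotate (n+1))⁻¹ i : Fin (n+1)) : ℕ) : ZMod (n+1)) -
              ((i : ℕ) : ZMod (n+1))) * ((k i : ℤ) : ZMod (n+1)) = -((k i : ℤ) : ZMod (n+1)) := by
          intro i
          rw [hrot n i]
          ring
        rw [Finset.sum_congr rfl (fun i _ => hterm i), Finset.sum_neg_distrib]
        have := congrArg (Int.cast : ℤ → ZMod (n+1)) hk
        push_cast at this
        rw [this, neg_zero]
      exact Subgroup.zpowers_le.mpr hmem hσ
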